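/- For every finite group Σ, the number of group homomorphisms from K_3 into Σ equals |Σ|², i.e. Nat.card (K_3 →* Σ) = (Nat.card Σ)². -/

import Mathlib

def braidRels (n : ℕ) : Set (FreeGroup (Fin (n - 1))) :=
  {r | (∃ i j : Fin (n - 1), 2 ≤ |(i : ℤ) - (j : ℤ)| ∧
        r = FreeGroup.of i * FreeGroup.of j * (FreeGroup.of i)⁻¹ * (FreeGroup.of j)⁻¹) ∨
       (∃ i j : Fin (n - 1), |(i : ℤ) - (j : ℤ)| = 1 ∧
        r = FreeGroup.of i * FreeGroup.of j * FreeGroup.of i *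
            (FreeGroup.of j)⁻¹ * (FreeGroup.of i)⁻¹ * (FreeGroup.of j)⁻¹)}

/-- The braid group `B n` on `n` strands, presented with generators `σ_1, …, σ_{n-1}`. -/
abbrev BraidGroup (n : ℕ) : Type := PresentedGroup (braidRels n)

/-- The generator `σ_{i+1}` of the braid group. -/
def braidGen {n : ℕ} (i : Fin (n - 1)) : BraidGroup n := PresentedGroup.of i

namespace K3Aux

open FreeGroup SemidirectProduct

abbrev F2 := FreeGroup Bool

noncomputable def psiHom : F2 →* F2 :=
  FreeGroup.lift (fun x => if x then (FreeGroup.of false)⁻¹ * FreeGroup.of true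
    else FreeGroup.of true)

noncomputable def psiInv : F2 →* F2 :=
  FreeGroup.lift (fun x => if x then FreeGroup.of false
    else FreeGroup.of false * (FreeGroup.of true)⁻¹)

noncomputable def psi : F2 ≃* F2 :=
  MonoidHom.toMulEquiv psiHom psiInv
    (by ext b; cases b <;> simp [psiHom, psiInv])
    (by ext b; cases b <;> simp [psiHom, psiInv])

noncomputable def phi : Multiplicative ℤ →* MulAut F2 := zpowersHom (MulAut F2) psi

noncomputable abbrev G3 := F2 ⋊[phi] Multiplicative ℤ

@[simp] lemma psi_a : psi (FreeGroup.of false) = FreeGroup.of true := by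
  simp [psi, psiHom]

@[simp] lemma psi_b :
    psi (FreeGroup.of true) = (FreeGroup.of false)⁻¹ * FreeGroup.of true := by
  simp [psi, psiHom]

@[simp] lemma phi_one : phi (Multiplicative.ofAdd 1) = psi := by
  simp [phi]

noncomputable def t : G3 := inr (Multiplicative.ofAdd 1)

lemma braid_rel_G3 :
    (inr (Multiplicative.ofAdd 1) : G3) * (inl (FreeGroup.of false) * inr (Multiplicative.ofAdd 1))
      * inr (Multiplicative.ofAdd 1) =
    (inl (FreeGroup.of false) * inr (Multiplicative.ofAdd 1)) * inr (Multiplicative.ofAdd 1)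
      * (inl (FreeGroup.of false) * inr (Multiplicative.ofAdd 1)) := by
    ext
    · simp [mul_left, mul_right, left_inl, right_inl, left_inr, right_inr, map_mul]
    · simp [mul_left, mul_right, left_inl, right_inl, left_inr, right_inr]



lemma rels_check : ∀ r ∈ braidRels 3, FreeGroup.lift
    (fun i : Fin 2 => if i = 0 then (inr (Multiplicative.ofAdd 1) : G3)
      else inl (FreeGroup.of false) * inr (Multiplicative.ofAdd 1)) r = 1 := by
  have key : ∀ (a b : G3), a * b * a = b * a * b →
      a * b * a * b⁻¹ * a⁻¹ * b⁻¹ = 1 := by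
    intro a b h
    rw [show a * b * a * b⁻¹ * a⁻¹ * b⁻¹ = (a * b * a) * (b * a * b)⁻¹ by group, h]
    group
  rintro r (⟨i, j, hij, rfl⟩ | ⟨i, j, hij, rfl⟩)
  · exfalso
    fin_cases i <;> fin_cases j <;> simp_all
  · fin_cases i <;> fin_cases j
    · norm_num at hij
    · simp only [_root_.map_mul, _root_.map_inv, FreeGroup.lift_apply_of]
      norm_num [-mul_inv_rev]
      exact key _ _ braid_rel_G3
    · simp only [_root_.map_mul, _root_.map_inv, FreeGroup.lift_apply_of]
      norm_num [-mul_inv_rev]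
      exact key _ _ braid_rel_G3.symm
    · norm_num at hij

noncomputable def Phi : BraidGroup 3 →* G3 := PresentedGroup.toGroup rels_check

@[simp] lemma Phi_zero : Phi (braidGen 0) = inr (Multiplicative.ofAdd 1) := by
  simp [Phi, braidGen, PresentedGroup.toGroup.of]

@[simp] lemma Phi_one' : Phi (braidGen 1) =
    inl (FreeGroup.of false) * inr (Multiplicative.ofAdd 1) := by
  simp [Phi, braidGen, PresentedGroup.toGroup.of]

noncomputable abbrev s1 : BraidGroup 3 := braidGen 0
noncomputable abbrev s2 : BraidGroup 3 := braidGen 1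

lemma braid_rel_B : s1 * s2 * s1 = s2 * s1 * s2 := by
  have hmem : (FreeGroup.of (0 : Fin 2) * FreeGroup.of (1 : Fin 2) * FreeGroup.of (0 : Fin 2) *
      (FreeGroup.of (1 : Fin 2))⁻¹ * (FreeGroup.of (0 : Fin 2))⁻¹ * (FreeGroup.of (1 : Fin 2))⁻¹)
      ∈ braidRels 3 := Or.inr ⟨0, 1, by norm_num, rfl⟩
  have h1 : PresentedGroup.mk (braidRels 3)
      (FreeGroup.of (0 : Fin 2) * FreeGroup.of (1 : Fin 2) * FreeGroup.of (0 : Fin 2) *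
      (FreeGroup.of (1 : Fin 2))⁻¹ * (FreeGroup.of (0 : Fin 2))⁻¹ * (FreeGroup.of (1 : Fin 2))⁻¹)
      = 1 := (QuotientGroup.eq_one_iff _).mpr (Subgroup.subset_normalClosure hmem)
  simp only [_root_.map_mul, _root_.map_inv] at h1
  have h2 : s1 * s2 * s1 * s2⁻¹ * s1⁻¹ * s2⁻¹ = 1 := h1
  calc s1 * s2 * s1 = (s1 * s2 * s1 * s2⁻¹ * s1⁻¹ * s2⁻¹) * (s2 * s1 * s2) := by group
  _ = s2 * s1 * s2 := by rw [h2]; group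

noncomputable def f1 : F2 →* BraidGroup 3 :=
  FreeGroup.lift (fun x => if x then s1 * s2 * s1⁻¹ * s1⁻¹ else s2 * s1⁻¹)

@[simp] lemma f1_a : f1 (FreeGroup.of false) = s2 * s1⁻¹ := by simp [f1]
@[simp] lemma f1_b : f1 (FreeGroup.of true) = s1 * s2 * s1⁻¹ * s1⁻¹ := by simp [f1]

noncomputable def f2 : Multiplicative ℤ →* BraidGroup 3 := zpowersHom _ s1

lemma step (x : F2) : f1 (psi x) = s1 * f1 x * s1⁻¹ := by
  have key : f1.comp psi.toMonoidHom = (MulAut.conj s1).toMonoidHom.comp f1 := by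
    refine FreeGroup.ext_hom _ _ fun b => ?_
    cases b
    · show f1 (psi (FreeGroup.of false)) = MulAut.conj s1 (f1 (FreeGroup.of false))
      rw [psi_a, f1_b, f1_a, MulAut.conj_apply]
      group
    · show f1 (psi (FreeGroup.of true)) = MulAut.conj s1 (f1 (FreeGroup.of true))
      rw [psi_b, _root_.map_mul, _root_.map_inv, f1_a, f1_b, MulAut.conj_apply]
      have h := braid_rel_B
      calc (s2 * s1⁻¹)⁻¹ * (s1 * s2 * s1⁻¹ * s1⁻¹)
          = s1 * s2⁻¹ * (s1 * s2 * s1) * s1⁻¹ * s1⁻¹ * s1⁻¹ := by group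
        _ = s1 * s2⁻¹ * (s2 * s1 * s2) * s1⁻¹ * s1⁻¹ * s1⁻¹ := by rw [h]
        _ = s1 * (s1 * s2 * s1⁻¹ * s1⁻¹) * s1⁻¹ := by group
  simpa [MulAut.conj_apply] using DFunLike.congr_fun key x

lemma step_inv (x : F2) : f1 (psi⁻¹ x) = s1⁻¹ * f1 x * s1 := by
  have h := step (psi⁻¹ x)
  simp only [show psi (psi⁻¹ x) = x from psi.apply_symm_apply x] at h
  rw [h]; group

lemma step_zpow (z : ℤ) : ∀ x : F2, f1 ((psi ^ z) x) = s1 ^ z * f1 x * (s1 ^ z)⁻¹ := by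
  induction z using Int.induction_on with
  | zero => intro x; simp
  | succ n ih =>
    intro x
    rw [zpow_add_one]
    have h : (psi ^ (n : ℤ) * psi) x = (psi ^ (n : ℤ)) (psi x) := rfl
    rw [h, ih (psi x), step]
    rw [zpow_add_one]
    group
  | pred n ih =>
    intro x
    rw [zpow_sub_one]
    have h : (psi ^ (-(n : ℤ)) * psi⁻¹) x = (psi ^ (-(n : ℤ))) (psi⁻¹ x) := rfl
    rw [h, ih (psi⁻¹ x), step_inv]
    rw [zpow_sub_one]
    group

lemma compat : ∀ g : Multiplicative ℤ, f1.comp (phi g).toMonoidHom =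
    (MulAut.conj (f2 g)).toMonoidHom.comp f1 := by
  intro g
  refine MonoidHom.ext fun x => ?_
  have h1 : phi g = psi ^ (Multiplicative.toAdd g) := rfl
  have h2 : f2 g = s1 ^ (Multiplicative.toAdd g) := rfl
  simp only [MonoidHom.comp_apply, MulEquiv.coe_toMonoidHom, MulAut.conj_apply, h1, h2]
  exact step_zpow _ x

noncomputable def Psi : G3 →* BraidGroup 3 := SemidirectProduct.lift f1 f2 compat

@[simp] lemma Psi_inl (n : F2) : Psi (inl n) = f1 n := SemidirectProduct.lift_inl _ _ _ n
@[simp] lemma Psi_inr (g : Multiplicative ℤ) : Psi (inr g) = f2 g :=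
  SemidirectProduct.lift_inr _ _ _ g

lemma f2_one : f2 (Multiplicative.ofAdd 1) = s1 := by
  simp [f2, zpowersHom_apply]

lemma Psi_comp_Phi : Psi.comp Phi = MonoidHom.id _ := by
  refine PresentedGroup.ext fun i => ?_
  fin_cases i
  · show Psi (Phi (braidGen 0)) = braidGen 0
    rw [Phi_zero, Psi_inr, f2_one]
  · show Psi (Phi (braidGen 1)) = braidGen 1
    rw [Phi_one', _root_.map_mul, Psi_inr, Psi_inl, f2_one, f1_a]
    group

lemma Phi_comp_Psi : Phi.comp Psi = MonoidHom.id _ := by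
  apply SemidirectProduct.hom_ext
  · refine FreeGroup.ext_hom _ _ fun b => ?_
    cases b
    · show Phi (Psi (inl (FreeGroup.of false))) = inl (FreeGroup.of false)
      rw [Psi_inl, f1_a]
      simp only [_root_.map_mul, _root_.map_inv, Phi_zero, Phi_one']
      group
    · show Phi (Psi (inl (FreeGroup.of true))) = inl (FreeGroup.of true)
      rw [Psi_inl, f1_b]
      simp only [_root_.map_mul, _root_.map_inv, Phi_zero, Phi_one']
      ext
      · simp [mul_left, mul_right, left_inl, right_inl, left_inr, right_inr, inv_left,
          inv_right, _root_.map_mul]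
      · simp [mul_left, mul_right, right_inl, right_inr, inv_right]
  · refine MonoidHom.ext_mint ?_
    show Phi (Psi (inr (Multiplicative.ofAdd 1))) = inr (Multiplicative.ofAdd 1)
    rw [Psi_inr, f2_one, Phi_zero]

noncomputable def braidEquiv : BraidGroup 3 ≃* G3 :=
  MonoidHom.toMulEquiv Phi Psi Psi_comp_Phi Phi_comp_Psi

open scoped commutatorElement in
lemma inl_mem_commutator (n : F2) : (inl n : G3) ∈ commutator G3 := by
  have hcomm : ∀ m : F2, ⁅(inr (Multiplicative.ofAdd 1) : G3), (inl m : G3)⁆ = inl (psi m * m⁻¹) := by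
    intro m
    rw [commutatorElement_def, ← _root_.map_inv (inr : Multiplicative ℤ →* G3),
      ← SemidirectProduct.inl_aut (φ := phi) (Multiplicative.ofAdd 1) m,
      ← _root_.map_inv (inl : F2 →* G3), ← _root_.map_mul, phi_one]
  have ha : (inl (FreeGroup.of false) : G3) ∈ commutator G3 := by
    have h := hcomm (FreeGroup.of true)
    rw [psi_b] at h
    have hm : (inl ((FreeGroup.of false)⁻¹) : G3) ∈ commutator G3 := by
      rw [show ((FreeGroup.of false)⁻¹ : F2) =
        (FreeGroup.of false)⁻¹ * FreeGroup.of true * (FreeGroup.of true)⁻¹ by group, ← h]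
      exact Subgroup.commutator_mem_commutator (Subgroup.mem_top _) (Subgroup.mem_top _)
    simpa using (commutator G3).inv_mem hm
  have hb : (inl (FreeGroup.of true) : G3) ∈ commutator G3 := by
    have h := hcomm (FreeGroup.of false)
    rw [psi_a] at h
    have hm : (inl (FreeGroup.of true * (FreeGroup.of false)⁻¹) : G3) ∈ commutator G3 := by
      rw [← h]
      exact Subgroup.commutator_mem_commutator (Subgroup.mem_top _) (Subgroup.mem_top _)
    have := (commutator G3).mul_mem hm ha
    simpa [mul_assoc] using this
  have hsub : (⊤ : Subgroup F2) ≤ (commutator G3).comap (inl : F2 →* G3) := by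
    rw [← FreeGroup.closure_range_of Bool, Subgroup.closure_le]
    rintro _ ⟨b, rfl⟩
    cases b
    · exact ha
    · exact hb
  exact hsub (Subgroup.mem_top n)

lemma commutator_G3 : commutator G3 = (inl : F2 →* G3).range := by
  apply le_antisymm
  · rw [range_inl_eq_ker_rightHom]
    exact Abelianization.commutator_subset_ker rightHom
  · rintro _ ⟨n, rfl⟩
    exact inl_mem_commutator n

noncomputable def K3EquivF2 : ↥(commutator (BraidGroup 3)) ≃* F2 := by
  have h1 : (commutator (BraidGroup 3)).map braidEquiv.toMonoidHom = commutator G3 := by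
    unfold commutator
    rw [Subgroup.map_commutator]
    congr 1 <;>
      exact Subgroup.map_top_of_surjective _ braidEquiv.surjective
  exact ((braidEquiv.subgroupMap (commutator (BraidGroup 3))).trans
    (MulEquiv.subgroupCongr (h1.trans commutator_G3))).trans
    (MonoidHom.ofInjective (inl_injective (φ := phi))).symm

end K3Aux

theorem card_hom_K3_eq_card_sq (S : Type) [Group S] [Finite S] :
    Nat.card (↥(commutator (BraidGroup 3)) →* S) = (Nat.card S) ^ 2 := by
  have e1 : (↥(commutator (BraidGroup 3)) →* S) ≃ (K3Aux.F2 →* S) :=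
    { toFun := fun f => f.comp K3Aux.K3EquivF2.symm.toMonoidHom
      invFun := fun g => g.comp K3Aux.K3EquivF2.toMonoidHom
      left_inv := fun f => by ext x; simp
      right_inv := fun g => by ext x; simp }
  have e2 : (K3Aux.F2 →* S) ≃ (Bool → S) := FreeGroup.lift.symm
  rw [Nat.card_congr (e1.trans e2), Nat.card_fun]
  simp
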